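/- Let n be a positive integer not divisible by 3, let Π be a (3,n)-Dyck path, let k be the number of cells of λ(Π) in the first column of the lattice and ℓ the number of cells of λ(Π) in the second column. If k > n/3 and k − ℓ > n/3 + 1, then skips(Π) = k − ℓ − ⌈n/3⌉ and dinv(Π) = 2ℓ + ⌈n/3⌉. -/

import Mathlib

open MvPolynomial

/-- An `(m,n)`-Dyck path: a north/east lattice path from `(0,0)` to `(m,n)` staying
weakly above the diagonal `y = (n/m)x`.  Such a path is encoded by recording, for each
of the `m` columns (indexed `0,…,m-1` from left to right), the number of cells of that
column lying above the path; this gives an antitone sequence, and the diagonal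
condition for the east step in column `i` reads `m * c i ≤ n * (m - 1 - i)`. -/
def DyckPath (m n : ℕ) : Type :=
  {c : Fin m → Fin (n + 1) //
    (∀ i j : Fin m, i ≤ j → (c j : ℕ) ≤ (c i : ℕ)) ∧
      ∀ i : Fin m, m * (c i : ℕ) ≤ n * (m - 1 - (i : ℕ))}

noncomputable instance instFintypeDyckPath (m n : ℕ) : Fintype (DyckPath m n) := by
  classical
  unfold DyckPath
  infer_instance

namespace DyckPath

variable {m n : ℕ}

/-- `λ(Π)`, the set of cells of the `m × n` lattice lying above the path `Π`.
The cell `(i, j)` (with `i : Fin m`, `j : Fin n`) is the cell in column `i + 1`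
(from the left) and row `j + 1` (from the bottom) in the paper's 1-based indexing. -/
def cellsAbove (P : DyckPath m n) : Set (Fin m × Fin n) :=
  {x | n - (P.1 x.1 : ℕ) ≤ (x.2 : ℕ)}

/-- `arm(x)`: the number of cells of `λ(Π)` strictly east of `x` (in the row of `x`). -/
noncomputable def arm (P : DyckPath m n) (x : Fin m × Fin n) : ℕ :=
  {y ∈ P.cellsAbove | x.1 < y.1 ∧ y.2 = x.2}.ncard

/-- `leg(x)`: the number of cells of `λ(Π)` strictly south of `x` (in the column of `x`). -/
noncomputable def leg (P : DyckPath m n) (x : Fin m × Fin n) : ℕ :=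
  {y ∈ P.cellsAbove | y.1 = x.1 ∧ y.2 < x.2}.ncard

end DyckPath

/-- The dinv condition `arm/(leg+1) < m/n < (arm+1)/leg` for a cell with given arm `a`
and leg `l`, the right inequality being interpreted as true when `l = 0`. -/
def dinvCond (m n a l : ℕ) : Prop :=
  (a : ℚ) / ((l : ℚ) + 1) < (m : ℚ) / (n : ℚ) ∧
    (l = 0 ∨ (m : ℚ) / (n : ℚ) < ((a : ℚ) + 1) / (l : ℚ))

namespace DyckPath

variable {m n : ℕ}

/-- `dinv(Π)`: the number of cells `x ∈ λ(Π)` with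
`arm(x)/(leg(x)+1) < m/n < (arm(x)+1)/leg(x)`. -/
noncomputable def dinv (P : DyckPath m n) : ℕ :=
  {x ∈ P.cellsAbove | dinvCond m n (P.arm x) (P.leg x)}.ncard

/-- `area(Π)`: the number of cells of the lattice lying entirely between the path and
the diagonal, i.e. cells lying entirely weakly above the diagonal `y = (n/m)x` and
below the path. -/
noncomputable def area (P : DyckPath m n) : ℕ :=
  {x : Fin m × Fin n | n * ((x.1 : ℕ) + 1) ≤ m * (x.2 : ℕ) ∧ x ∉ P.cellsAbove}.ncard

end DyckPath

/-- The `(m,n)`-rational `q,t`-Catalan polynomial `C_{m,n}(q,t)`, with `q = X 0` and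
`t = X 1`:  `C_{m,n}(q,t) = Σ_Π q^{dinv(Π)} t^{area(Π)}` over all `(m,n)`-Dyck paths. -/
noncomputable def ratCatalan (m n : ℕ) : MvPolynomial (Fin 2) ℤ :=
  ∑ P : DyckPath m n, X 0 ^ P.dinv * X 1 ^ P.area

/-- The rank of the cell `(i, j)` of the `3 × n` lattice: in the paper's 1-based
coordinates `(a, b) = (i+1, j+1)`, this is `R(a,b) = -a·n + 3(b-1)`. -/
def cellRank (n : ℕ) (x : Fin 3 × Fin n) : ℤ :=
  3 * (x.2 : ℤ) - ((x.1 : ℤ) + 1) * (n : ℤ)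

/-- The set of positive ranks of the `3 × n` lattice: these, in increasing order, are
the entries of the rank word. -/
def posRank (n : ℕ) : Set ℤ :=
  {r | 0 < r ∧ ∃ x : Fin 3 × Fin n, cellRank n x = r}

/-- The set of marked ranks of a `(3,n)`-Dyck path: the ranks of the cells above
the path. -/
def markedRank {n : ℕ} (P : DyckPath 3 n) : Set ℤ :=
  cellRank n '' P.cellsAbove

/-- `skips(Π)`: the number of skips of `Π`, i.e. of maximal blocks of consecutive
unmarked entries of the rank word of `Π` having at least one marked entry to the left
and at least one marked entry to the right.  Each such block is counted through its
rightmost entry `r`: `r` is an unmarked entry, some marked entry lies to its left, and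
the next entry of the rank word after `r` is marked. -/
noncomputable def DyckPath.skips {n : ℕ} (P : DyckPath 3 n) : ℕ :=
  {r : ℤ | r ∈ posRank n ∧ r ∉ markedRank P ∧
    (∃ l ∈ markedRank P, l < r) ∧
    ∃ s ∈ markedRank P, r < s ∧ ∀ t ∈ posRank n, r < t → s ≤ t}.ncard


open scoped Classical in
lemma ncard_eq_card_filter {α : Type*} [Fintype α] (S : Set α) (p : α → Prop)
    [DecidablePred p] (h : ∀ x, x ∈ S ↔ p x) : S.ncard = (Finset.univ.filter p).card := by
  rw [← Set.ncard_coe_finset]; congr 1; ext x; simp [h x]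

lemma card_filter_col {n : ℕ} (i : Fin 3) (p : Fin 3 × Fin n → Prop) (q : ℕ → Prop)
    [DecidablePred p] [DecidablePred q]
    (hp : ∀ x : Fin 3 × Fin n, p x ↔ (x.1 = i ∧ q (x.2 : ℕ))) :
    (Finset.univ.filter p).card = ((Finset.range n).filter q).card := by
  apply Finset.card_bij (fun (x : Fin 3 × Fin n) _ => (x.2 : ℕ))
  · intro a ha
    simp only [Finset.mem_filter, Finset.mem_univ, true_and, Finset.mem_range] at ha ⊢
    exact ⟨a.2.isLt, ((hp a).1 ha).2⟩
  · intro a ha b hb h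
    simp only [Finset.mem_filter, Finset.mem_univ, true_and] at ha hb
    have h1 := ((hp a).1 ha).1; have h2 := ((hp b).1 hb).1
    exact Prod.ext (h1.trans h2.symm) (Fin.val_injective h)
  · intro b hb
    simp only [Finset.mem_filter, Finset.mem_range] at hb
    exact ⟨(i, ⟨b, hb.1⟩), by simp [Finset.mem_filter, (hp (i, ⟨b, hb.1⟩)).2 ⟨rfl, hb.2⟩], rfl⟩

lemma fin3 (a : Fin 3) : a = 0 ∨ a = 1 ∨ a = 2 := by fin_cases a <;> simp



/-- If `k > n/3` and `k − ℓ > n/3 + 1`, where `k` and `ℓ` are the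
numbers of cells of `λ(Π)` in the first and second columns, then
`skips(Π) = k − ℓ − ⌈n/3⌉` and `dinv(Π) = 2ℓ + ⌈n/3⌉`. -/
theorem skips_dinv_of_large_first_column_case_two (n : ℕ) (hn : 0 < n) (h3 : ¬ (3 ∣ n))
    (P : DyckPath 3 n) (k ℓ : ℕ)
    (hk : k = {x ∈ P.cellsAbove | x.1 = 0}.ncard)
    (hl : ℓ = {x ∈ P.cellsAbove | x.1 = 1}.ncard)
    (hkn : (n : ℚ) / 3 < (k : ℚ)) (hkl : (n : ℚ) / 3 + 1 < (k : ℚ) - (ℓ : ℚ)) :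
    (P.skips : ℤ) = (k : ℤ) - (ℓ : ℤ) - ⌈(n : ℚ) / 3⌉ ∧
      (P.dinv : ℤ) = 2 * (ℓ : ℤ) + ⌈(n : ℚ) / 3⌉ := by
  classical
  set k' : ℕ := (P.1 0 : ℕ) with hk'def
  set l' : ℕ := (P.1 1 : ℕ) with hl'def
  set q : ℕ := n / 3 with hqdef
  set r : ℕ := n % 3 with hrdef
  have hn3 : n = 3 * q + r := by omega
  have hr12 : r = 1 ∨ r = 2 := by omega
  have hc2 : (P.1 2 : ℕ) = 0 := by
    have := P.2.2 2
    simp at this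
    simp [this]
  have hl3 : 3 * l' ≤ n := by have := P.2.2 1; simpa using this
  have hk3 : 3 * k' ≤ 2 * n := by have := P.2.2 0; simp at this; omega
  have hlk : l' ≤ k' := P.2.1 0 1 (by decide)
  have hkn' : k' ≤ n := by omega
  have hmem : ∀ x : Fin 3 × Fin n, x ∈ P.cellsAbove ↔ n - (P.1 x.1 : ℕ) ≤ (x.2 : ℕ) :=
    fun x => Iff.rfl
  have colcount : ∀ (i : Fin 3),
      {x ∈ P.cellsAbove | x.1 = i}.ncard = (P.1 i : ℕ) := by
    intro i
    rw [ncard_eq_card_filter _ (fun x : Fin 3 × Fin n => x.1 = i ∧ n - (P.1 i : ℕ) ≤ (x.2 : ℕ))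
      (by
        intro x
        simp only [Set.mem_sep_iff, hmem]
        constructor
        · rintro ⟨h1, h2⟩; subst h2; exact ⟨rfl, h1⟩
        · rintro ⟨h1, h2⟩; subst h1; exact ⟨h2, rfl⟩)]
    rw [card_filter_col i _ (fun m => n - (P.1 i : ℕ) ≤ m) (fun x => Iff.rfl)]
    have h3 : ((Finset.range n).filter fun j => n - (P.1 i : ℕ) ≤ j) = Finset.Ico (n - (P.1 i : ℕ)) n := by
      ext j; simp [Finset.mem_Ico]; omega
    rw [h3, Nat.card_Ico]
    have : (P.1 i : ℕ) ≤ n := by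
      have := P.1 i |>.isLt; omega
    omega
  have hkk : k = k' := by rw [hk, colcount 0]
  have hll : ℓ = l' := by rw [hl, colcount 1]
  have hknn : n < 3 * k' := by
    have h2 : (n : ℚ) < 3 * (k' : ℚ) := by rw [hkk] at hkn; linarith
    exact_mod_cast h2
  have hkln : n + 3 + 3 * l' < 3 * k' := by
    have h2 : (n : ℚ) + 3 + 3 * (l' : ℚ) < 3 * (k' : ℚ) := by
      rw [hkk] at hkn; rw [hkk, hll] at hkl; linarith
    exact_mod_cast h2
  have hceil : ⌈(n : ℚ) / 3⌉ = (q : ℤ) + 1 := by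
    have h1 : (q : ℚ) < (n : ℚ) / 3 := by
      rw [lt_div_iff₀ (by norm_num : (0:ℚ) < 3)]
      have h : (3 * q : ℕ) < n := by omega
      have h' := (Nat.cast_lt (α := ℚ)).2 h
      push_cast at h'
      linarith
    have h2 : (n : ℚ) / 3 ≤ (q : ℚ) + 1 := by
      rw [div_le_iff₀ (by norm_num : (0:ℚ) < 3)]
      have h : n ≤ 3 * q + 3 := by omega
      have h' := (Nat.cast_le (α := ℚ)).2 h
      push_cast at h'
      linarith
    rw [Int.ceil_eq_iff]
    push_cast
    constructor <;> linarith
  -- arm and leg formulas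
  have harm0 : ∀ j : Fin n, P.arm (0, j) = (if n - l' ≤ (j : ℕ) then 1 else 0) := by
    intro j
    have hj := j.isLt
    have hiff : ∀ y : Fin 3 × Fin n,
        y ∈ {y ∈ P.cellsAbove | ((0 : Fin 3), j).1 < y.1 ∧ y.2 = ((0 : Fin 3), j).2} ↔
          (y.1 = 1 ∧ (n - l' ≤ (y.2 : ℕ) ∧ (y.2 : ℕ) = (j : ℕ))) := by
      rintro ⟨a, b⟩
      have hb := b.isLt
      simp only [Set.mem_sep_iff, hmem, Fin.lt_def]
      rcases fin3 a with rfl | rfl | rfl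
      · simp
      · simp only [← hl'def, Fin.ext_iff, Fin.val_zero, Fin.val_one]
        norm_num
        exact fun _ => Iff.rfl
      · constructor
        · rintro ⟨h1, _, _⟩; rw [hc2] at h1; omega
        · rintro ⟨h, _⟩; exact absurd h (by decide)
    unfold DyckPath.arm
    rw [ncard_eq_card_filter _ _ hiff,
        card_filter_col 1 _ (fun m => n - l' ≤ m ∧ m = (j : ℕ)) (fun x => Iff.rfl)]
    by_cases hc : n - l' ≤ (j : ℕ)
    · rw [if_pos hc]
      have he : ((Finset.range n).filter (fun m => n - l' ≤ m ∧ m = (j : ℕ))) = {(j : ℕ)} := by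
        ext m; simp only [Finset.mem_filter, Finset.mem_range, Finset.mem_singleton]; omega
      rw [he, Finset.card_singleton]
    · rw [if_neg hc]
      have he : ((Finset.range n).filter (fun m => n - l' ≤ m ∧ m = (j : ℕ))) = ∅ := by
        ext m; simp only [Finset.mem_filter, Finset.mem_range, Finset.notMem_empty, iff_false]; omega
      rw [he, Finset.card_empty]
  have harm1 : ∀ j : Fin n, P.arm (1, j) = 0 := by
    intro j
    have hiff : ∀ y : Fin 3 × Fin n,
        y ∈ {y ∈ P.cellsAbove | ((1 : Fin 3), j).1 < y.1 ∧ y.2 = ((1 : Fin 3), j).2} ↔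
          (y.1 = 1 ∧ False) := by
      rintro ⟨a, b⟩
      have hb := b.isLt
      simp only [Set.mem_sep_iff, hmem, Fin.lt_def]
      rcases fin3 a with rfl | rfl | rfl
      · simp
      · simp
      · constructor
        · rintro ⟨h1, _, _⟩; rw [hc2] at h1; omega
        · rintro ⟨h, hf⟩; exact hf.elim
    unfold DyckPath.arm
    rw [ncard_eq_card_filter _ _ hiff,
        card_filter_col 1 _ (fun _ => False) (fun x => Iff.rfl)]
    simp
  have hleg : ∀ (i : Fin 3) (j : Fin n), P.leg (i, j) = (j : ℕ) - (n - (P.1 i : ℕ)) := by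
    intro i j
    have hj := j.isLt
    have hiff : ∀ y : Fin 3 × Fin n,
        y ∈ {y ∈ P.cellsAbove | y.1 = (i, j).1 ∧ y.2 < (i, j).2} ↔
          (y.1 = i ∧ (n - (P.1 i : ℕ) ≤ (y.2 : ℕ) ∧ (y.2 : ℕ) < (j : ℕ))) := by
      rintro ⟨a, b⟩
      simp only [Set.mem_sep_iff, hmem, Fin.lt_def]
      constructor
      · rintro ⟨h1, rfl, h3⟩; exact ⟨rfl, h1, h3⟩
      · rintro ⟨rfl, h1, h2⟩; exact ⟨h1, rfl, h2⟩
    unfold DyckPath.leg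
    rw [ncard_eq_card_filter _ _ hiff,
        card_filter_col i _ (fun m => n - (P.1 i : ℕ) ≤ m ∧ m < (j : ℕ)) (fun x => Iff.rfl)]
    have he : ((Finset.range n).filter (fun m => n - (P.1 i : ℕ) ≤ m ∧ m < (j : ℕ)))
        = Finset.Ico (n - (P.1 i : ℕ)) (j : ℕ) := by
      ext m; simp only [Finset.mem_filter, Finset.mem_range, Finset.mem_Ico]; omega
    rw [he, Nat.card_Ico]
  have hdinvCond : ∀ a l : ℕ, dinvCond 3 n a l ↔ (a * n < 3 * (l + 1)) ∧ (l = 0 ∨ 3 * l < (a + 1) * n) := by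
    intro a l
    have hnq : (0:ℚ) < (n:ℚ) := by exact_mod_cast hn
    unfold dinvCond
    constructor
    · rintro ⟨h1, h2⟩
      refine ⟨?_, ?_⟩
      · have := (div_lt_div_iff₀ (by positivity) hnq).1 h1
        exact_mod_cast this
      · by_cases hl0 : l = 0
        · exact Or.inl hl0
        · rcases h2 with h | h
          · exact Or.inl h
          · right
            have hlq : (0:ℚ) < (l:ℚ) := by
              exact_mod_cast Nat.pos_of_ne_zero hl0
            have := (div_lt_div_iff₀ hnq hlq).1 h
            exact_mod_cast this
    · rintro ⟨h1, h2⟩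
      refine ⟨?_, ?_⟩
      · rw [div_lt_div_iff₀ (by positivity) hnq]
        exact_mod_cast h1
      · by_cases hl0 : l = 0
        · exact Or.inl hl0
        · rcases h2 with h | h
          · exact Or.inl h
          · right
            have hlq : (0:ℚ) < (l:ℚ) := by
              exact_mod_cast Nat.pos_of_ne_zero hl0
            rw [div_lt_div_iff₀ hnq hlq]
            exact_mod_cast h
  have hdinv : P.dinv = 2 * l' + (q + 1) := by
    have hiff : ∀ x : Fin 3 × Fin n,
        x ∈ {x ∈ P.cellsAbove | dinvCond 3 n (P.arm x) (P.leg x)} ↔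
          ((fun x : Fin 3 × Fin n => x.1 = 0 ∧
              (n - k' ≤ (x.2 : ℕ) ∧ ((x.2 : ℕ) < n - k' + (q + 1) ∨ n - l' ≤ (x.2 : ℕ)))) x ∨
           (fun x : Fin 3 × Fin n => x.1 = 1 ∧ n - l' ≤ (x.2 : ℕ)) x) := by
      rintro ⟨a, b⟩
      have hb := b.isLt
      simp only [Set.mem_sep_iff, Set.mem_setOf_eq, hmem]
      rcases fin3 a with rfl | rfl | rfl
      · rw [harm0 b, hleg 0 b, hdinvCond, ← hk'def]
        simp only [show ((0:Fin 3) = 0) ↔ True from by simp,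
          show ((0:Fin 3) = 1) ↔ False from by decide, true_and, false_and, or_false]
        by_cases hcb : n - l' ≤ (b : ℕ)
        · rw [if_pos hcb]; omega
        · rw [if_neg hcb]; omega
      · rw [harm1 b, hleg 1 b, hdinvCond, ← hl'def]
        simp only [show ((1:Fin 3) = 0) ↔ False from by decide,
          show ((1:Fin 3) = 1) ↔ True from by simp, true_and, false_and, false_or]
        omega
      · constructor
        · rintro ⟨h1, _⟩; rw [hc2] at h1; omega
        · rintro (⟨h, _⟩ | ⟨h, _⟩) <;> exact absurd h (by decide)
    unfold DyckPath.dinv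
    rw [ncard_eq_card_filter _ _ hiff, Finset.filter_or]
    rw [Finset.card_union_of_disjoint (by
      rw [Finset.disjoint_left]
      rintro x hx hy
      simp only [Finset.mem_filter] at hx hy
      rw [hx.2.1] at hy
      exact absurd hy.2.1 (by decide))]
    rw [card_filter_col 0 _
        (fun m => n - k' ≤ m ∧ (m < n - k' + (q + 1) ∨ n - l' ≤ m)) (fun x => Iff.rfl),
      card_filter_col 1 _ (fun m => n - l' ≤ m) (fun x => Iff.rfl)]
    have he1 : ((Finset.range n).filter (fun m => n - k' ≤ m ∧ (m < n - k' + (q + 1) ∨ n - l' ≤ m)))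
        = Finset.Ico (n - k') (n - k' + (q + 1)) ∪ Finset.Ico (n - l') n := by
      ext m
      simp only [Finset.mem_filter, Finset.mem_range, Finset.mem_union, Finset.mem_Ico]
      omega
    have he2 : ((Finset.range n).filter (fun m => n - l' ≤ m)) = Finset.Ico (n - l') n := by
      ext m; simp only [Finset.mem_filter, Finset.mem_range, Finset.mem_Ico]; omega
    rw [he1, he2, Finset.card_union_of_disjoint (by
      rw [Finset.disjoint_left]
      intro m hm1 hm2
      simp only [Finset.mem_Ico] at hm1 hm2
      omega)]
    simp only [Nat.card_Ico]
    omega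
  have e0 : ((0 : Fin 3) : ℕ) = 0 := rfl
  have e1 : ((1 : Fin 3) : ℕ) = 1 := rfl
  have e2 : ((2 : Fin 3) : ℕ) = 2 := rfl
  have hmarked : ∀ z : ℤ, z ∈ markedRank P ↔
      ((∃ b : ℕ, b < n ∧ n - k' ≤ b ∧ z = 3 * b - n) ∨
       (∃ b : ℕ, b < n ∧ n - l' ≤ b ∧ z = 3 * b - 2 * n)) := by
    intro z
    constructor
    · rintro ⟨⟨a, b⟩, hx, rfl⟩
      have hx' := (hmem (a, b)).1 hx
      have hb := b.isLt
      unfold cellRank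
      rcases fin3 a with rfl | rfl | rfl
      · exact Or.inl ⟨(b : ℕ), hb, hx', by push_cast [e0, e1, e2]; ring⟩
      · exact Or.inr ⟨(b : ℕ), hb, hx', by push_cast [e0, e1, e2]; ring⟩
      · exfalso; rw [hc2] at hx'; omega
    · rintro (⟨b, hbn, hbk, rfl⟩ | ⟨b, hbn, hbl, rfl⟩)
      · exact ⟨(0, ⟨b, hbn⟩), (hmem _).2 hbk, by unfold cellRank; push_cast [e0, e1, e2]; ring⟩
      · exact ⟨(1, ⟨b, hbn⟩), (hmem _).2 hbl, by unfold cellRank; push_cast [e0, e1, e2]; ring⟩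
  have hpos : ∀ z : ℤ, z ∈ posRank n ↔
      (0 < z ∧ ∃ b : ℕ, b < n ∧ (z = 3 * b - n ∨ z = 3 * b - 2 * n)) := by
    intro z
    constructor
    · rintro ⟨hz, ⟨a, b⟩, rfl⟩
      have hb := b.isLt
      unfold cellRank at hz ⊢
      refine ⟨hz, (b : ℕ), hb, ?_⟩
      rcases fin3 a with rfl | rfl | rfl
      · exact Or.inl (by push_cast [e0, e1, e2]; ring)
      · exact Or.inr (by push_cast [e0, e1, e2]; ring)
      · exfalso
        have h2 : ((2 : Fin 3) : ℤ) = 2 := rfl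
        rw [h2] at hz
        have : ((b : ℕ) : ℤ) < (n : ℤ) := by exact_mod_cast hb
        omega
    · rintro ⟨hz, b, hbn, hzz⟩
      refine ⟨hz, ?_⟩
      rcases hzz with rfl | rfl
      · exact ⟨(0, ⟨b, hbn⟩), by unfold cellRank; push_cast [e0, e1, e2]; ring⟩
      · exact ⟨(1, ⟨b, hbn⟩), by unfold cellRank; push_cast [e0, e1, e2]; ring⟩
  have hskips : P.skips = k' - l' - q - 1 := by
    have hSeq : {r : ℤ | r ∈ posRank n ∧ r ∉ markedRank P ∧
        (∃ l ∈ markedRank P, l < r) ∧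
        ∃ s ∈ markedRank P, r < s ∧ ∀ t ∈ posRank n, r < t → s ≤ t} =
        ↑((Finset.Icc ((n : ℤ) + q - k' + 1) ((n : ℤ) - l' - 1)).image
            (fun j : ℤ => 3 * j - 2 * n)) := by
      ext z
      simp only [Set.mem_setOf_eq, Finset.coe_image, Set.mem_image, Finset.mem_coe,
        Finset.mem_Icc]
      constructor
      · rintro ⟨hz1, hz2, hz3, _⟩
        rw [hpos] at hz1
        obtain ⟨hzpos, b, hbn, hform⟩ := hz1
        rw [hmarked] at hz2
        obtain ⟨w, hw, hwz⟩ := hz3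
        rw [hmarked] at hw
        rcases hform with rfl | rfl
        · exfalso
          have hbk : ¬ (n - k' ≤ b) := fun hcon => hz2 (Or.inl ⟨b, hbn, hcon, rfl⟩)
          rcases hw with ⟨b', hb'n, hb'k, rfl⟩ | ⟨b', hb'n, hb'l, rfl⟩ <;> omega
        · have hbl : ¬ (n - l' ≤ b) := fun hcon => hz2 (Or.inr ⟨b, hbn, hcon, rfl⟩)
          rcases hw with ⟨b', hb'n, hb'k, rfl⟩ | ⟨b', hb'n, hb'l, rfl⟩
          · exact ⟨(b : ℤ), ⟨by omega, by omega⟩, rfl⟩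
          · exfalso; omega
      · rintro ⟨j, ⟨hj1, hj2⟩, rfl⟩
        refine ⟨?_, ?_, ?_, ?_⟩
        · rw [hpos]
          exact ⟨by omega, j.toNat, by omega, Or.inr (by omega)⟩
        · rw [hmarked]
          rintro (⟨b', hb'n, hb'k, he⟩ | ⟨b', hb'n, hb'l, he⟩) <;> omega
        · refine ⟨3 * ((n : ℤ) - k') - n, ?_, by omega⟩
          rw [hmarked]
          exact Or.inl ⟨n - k', by omega, by omega, by omega⟩
        · refine ⟨3 * (j - q) - n, ?_, by omega, ?_⟩
          · rw [hmarked]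
            exact Or.inl ⟨(j - q).toNat, by omega, by omega, by omega⟩
          · intro t ht hzt
            rw [hpos] at ht
            obtain ⟨htpos, b'', hb''n, hform⟩ := ht
            rcases hform with rfl | rfl <;> omega
    unfold DyckPath.skips
    rw [hSeq, Set.ncard_coe_finset,
      Finset.card_image_of_injOn (fun x _ y _ h => by omega), Int.card_Icc]
    omega
  constructor
  · rw [hskips, hceil, hkk, hll]
    have : q + 2 ≤ k' - l' := by omega
    push_cast [Nat.cast_sub (show l' + q + 1 ≤ k' by omega)]
    push_cast
    omega
  · rw [hdinv, hceil, hll]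
    push_cast
    omega
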